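/- For every ε > 0, let T = 1/(√3 ε) and define x : [0, T) → ℝ by x(t) = (ε⁻¹ − √3 t)⁻¹. Then x is twice differentiable on [0,T), x(0) = ε, the pair (x, y) with y ≡ 0 satisfies the open-loop system ẍ − 6x³ + 90x y² + 32 y³ = 0 and ÿ + 90 x² y + 96 x y² = 0 on [0,T), and x(t) → ∞ as t → T⁻. In particular, the origin is not a Lyapunov stable equilibrium of the open-loop system. -/

import Mathlib

/-!
Statement 16: `x(t) = (ε⁻¹ − √3 t)⁻¹`, `y ≡ 0` is a solution of the open-loop
abstract system `ẍ − 6x³ + 90xy² + 32y³ = 0`, `ÿ + 90x²y + 96xy² = 0` on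
`[0, T)` with `T = 1/(√3 ε)`, it starts at `x(0) = ε` and blows up as
`t → T⁻`; in particular, the origin is not a Lyapunov stable equilibrium of
the open-loop system.
-/

open Real Set Filter

private lemma aux_lin (c t : ℝ) :
    HasDerivAt (fun s : ℝ => c - Real.sqrt 3 * s) (-Real.sqrt 3) t := by
  simpa using ((hasDerivAt_id t).const_mul (Real.sqrt 3)).const_sub c

private lemma aux_hd1 (c t : ℝ) (ht : c - Real.sqrt 3 * t ≠ 0) :
    HasDerivAt (fun s => (c - Real.sqrt 3 * s)⁻¹)
      (Real.sqrt 3 * ((c - Real.sqrt 3 * t) ^ 2)⁻¹) t := by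
  have h2 := (aux_lin c t).inv ht
  refine h2.congr_deriv ?_; symm
  field_simp

private lemma aux_hd2 (c t : ℝ) (ht : c - Real.sqrt 3 * t ≠ 0) :
    HasDerivAt (fun s => Real.sqrt 3 * ((c - Real.sqrt 3 * s) ^ 2)⁻¹)
      (6 * ((c - Real.sqrt 3 * t)⁻¹) ^ 3) t := by
  have h2 := (((aux_lin c t).pow 2).inv (pow_ne_zero 2 ht)).const_mul (Real.sqrt 3)
  refine h2.congr_deriv ?_; symm
  simp only [Pi.pow_apply]
  have hs : Real.sqrt 3 ^ 2 = 3 := Real.sq_sqrt (by norm_num)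
  field_simp
  ring_nf
  linear_combination (2*Real.sqrt 3*t - 2*c) * hs

private lemma aux_derivEq (c t : ℝ) (ht : c - Real.sqrt 3 * t ≠ 0) :
    deriv (fun s => (c - Real.sqrt 3 * s)⁻¹)
      =ᶠ[nhds t] fun s => Real.sqrt 3 * ((c - Real.sqrt 3 * s) ^ 2)⁻¹ := by
  have hopen : IsOpen {s : ℝ | c - Real.sqrt 3 * s ≠ 0} := by
    have : Continuous fun s : ℝ => c - Real.sqrt 3 * s := by continuity
    exact isOpen_compl_singleton.preimage this
  filter_upwards [hopen.mem_nhds ht] with s hs using (aux_hd1 c s hs).deriv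

private lemma aux_deriv2 (c t : ℝ) (ht : c - Real.sqrt 3 * t ≠ 0) :
    deriv (deriv (fun s => (c - Real.sqrt 3 * s)⁻¹)) t
      = 6 * ((c - Real.sqrt 3 * t)⁻¹) ^ 3 := by
  rw [(aux_derivEq c t ht).deriv_eq]
  exact (aux_hd2 c t ht).deriv

private lemma aux_diff2 (c t : ℝ) (ht : c - Real.sqrt 3 * t ≠ 0) :
    DifferentiableAt ℝ (deriv (fun s => (c - Real.sqrt 3 * s)⁻¹)) t :=
  (aux_hd2 c t ht).differentiableAt.congr_of_eventuallyEq (aux_derivEq c t ht)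

private lemma aux_pos (ε t : ℝ) (hε : 0 < ε) (ht : t < 1 / (Real.sqrt 3 * ε)) :
    0 < ε⁻¹ - Real.sqrt 3 * t := by
  have h3 : (0:ℝ) < Real.sqrt 3 := Real.sqrt_pos.mpr (by norm_num)
  have h1 : Real.sqrt 3 * t < Real.sqrt 3 * (1 / (Real.sqrt 3 * ε)) :=
    mul_lt_mul_of_pos_left ht h3
  have heq : Real.sqrt 3 * (1 / (Real.sqrt 3 * ε)) = ε⁻¹ := by
    field_simp
  linarith [heq ▸ h1]

theorem statement16 (ε : ℝ) (hε : 0 < ε) (T : ℝ) (hT : T = 1 / (Real.sqrt 3 * ε))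
    (x : ℝ → ℝ) (hx : ∀ t, x t = (ε⁻¹ - Real.sqrt 3 * t)⁻¹)
    (y : ℝ → ℝ) (hy : ∀ t, y t = 0) :
    -- `x` is twice differentiable on `[0, T)`
    (∀ t ∈ Ico (0 : ℝ) T, DifferentiableAt ℝ x t ∧ DifferentiableAt ℝ (deriv x) t) ∧
    -- initial condition
    x 0 = ε ∧
    -- `(x, y)` solves the open-loop system on `[0, T)`
    (∀ t ∈ Ico (0 : ℝ) T,
      deriv (deriv x) t - 6 * x t ^ 3 + 90 * x t * y t ^ 2 + 32 * y t ^ 3 = 0 ∧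
      deriv (deriv y) t + 90 * x t ^ 2 * y t + 96 * x t * y t ^ 2 = 0) ∧
    -- blow-up as `t → T⁻`
    Tendsto x (nhdsWithin T (Iio T)) atTop ∧
    -- in particular, the origin is not a Lyapunov stable equilibrium of the
    -- open-loop system
    ¬ (∀ ε' > (0 : ℝ), ∃ δ > (0 : ℝ), ∀ T' > (0 : ℝ), ∀ u v : ℝ → ℝ,
        (∀ t ∈ Ico (0 : ℝ) T', DifferentiableAt ℝ u t ∧
          DifferentiableAt ℝ (deriv u) t ∧ DifferentiableAt ℝ v t ∧
          DifferentiableAt ℝ (deriv v) t) →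
        (∀ t ∈ Ico (0 : ℝ) T',
          deriv (deriv u) t - 6 * u t ^ 3 + 90 * u t * v t ^ 2 + 32 * v t ^ 3 = 0 ∧
          deriv (deriv v) t + 90 * u t ^ 2 * v t + 96 * u t * v t ^ 2 = 0) →
        ‖(u 0, v 0, deriv u 0, deriv v 0)‖ < δ →
        ∀ t ∈ Ico (0 : ℝ) T', ‖(u t, v t, deriv u t, deriv v t)‖ < ε') := by
  have hxe : x = fun s => (ε⁻¹ - Real.sqrt 3 * s)⁻¹ := funext hx
  have hye : y = fun _ => (0:ℝ) := funext hy
  subst hxe hye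
  have h3 : (0:ℝ) < Real.sqrt 3 := Real.sqrt_pos.mpr (by norm_num)
  have hs3 : Real.sqrt 3 ^ 2 = 3 := Real.sq_sqrt (by norm_num)
  refine ⟨?_, ?_, ?_, ?_, ?_⟩
  · -- twice differentiable
    intro t ht
    have hne : ε⁻¹ - Real.sqrt 3 * t ≠ 0 := (aux_pos ε t hε (hT ▸ ht.2)).ne'
    exact ⟨(aux_hd1 ε⁻¹ t hne).differentiableAt, aux_diff2 ε⁻¹ t hne⟩
  · -- initial condition
    simp
  · -- solves the system
    intro t ht
    have hne : ε⁻¹ - Real.sqrt 3 * t ≠ 0 := (aux_pos ε t hε (hT ▸ ht.2)).ne'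
    constructor
    · rw [aux_deriv2 ε⁻¹ t hne]; ring
    · simp [deriv_const']
  · -- blow-up
    have hfT : ε⁻¹ - Real.sqrt 3 * T = 0 := by
      rw [hT]; field_simp; ring
    have hcont : Tendsto (fun s : ℝ => ε⁻¹ - Real.sqrt 3 * s)
        (nhdsWithin T (Iio T)) (nhds 0) := by
      have hc : Continuous fun s : ℝ => ε⁻¹ - Real.sqrt 3 * s := by continuity
      have h : Tendsto (fun s : ℝ => ε⁻¹ - Real.sqrt 3 * s)
          (nhdsWithin T (Iio T)) (nhds (ε⁻¹ - Real.sqrt 3 * T)) :=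
        (hc.tendsto T).mono_left nhdsWithin_le_nhds
      rwa [hfT] at h
    have hmem : ∀ᶠ s in nhdsWithin T (Iio T),
        (ε⁻¹ - Real.sqrt 3 * s) ∈ Ioi (0:ℝ) := by
      filter_upwards [eventually_mem_nhdsWithin] with s hs
      exact aux_pos ε s hε (hT ▸ hs)
    have hto : Tendsto (fun s : ℝ => ε⁻¹ - Real.sqrt 3 * s)
        (nhdsWithin T (Iio T)) (nhdsWithin 0 (Ioi 0)) :=
      tendsto_nhdsWithin_iff.mpr ⟨hcont, hmem⟩
    exact tendsto_inv_nhdsGT_zero.comp hto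
  · -- not Lyapunov stable
    intro h
    obtain ⟨δ, hδ, hstab⟩ := h 1 one_pos
    set ε₀ : ℝ := min 1 (δ / (1 + Real.sqrt 3)) with hε₀def
    have h1s : (0:ℝ) < 1 + Real.sqrt 3 := by linarith
    have hε₀ : 0 < ε₀ := lt_min one_pos (by positivity)
    have hε₀1 : ε₀ ≤ 1 := min_le_left _ _
    have hε₀δ : ε₀ ≤ δ / (1 + Real.sqrt 3) := min_le_right _ _
    have h31 : (1:ℝ) ≤ Real.sqrt 3 := by nlinarith
    have hinv1 : (1:ℝ) ≤ ε₀⁻¹ := (one_le_inv₀ hε₀).mpr hε₀1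
    set T₀ : ℝ := 1 / (Real.sqrt 3 * ε₀) with hT₀def
    have hT₀ : 0 < T₀ := by positivity
    set u : ℝ → ℝ := fun s => (ε₀⁻¹ - Real.sqrt 3 * s)⁻¹ with hudef
    set v : ℝ → ℝ := fun _ => (0:ℝ) with hvdef
    have hne : ∀ t ∈ Ico (0:ℝ) T₀, ε₀⁻¹ - Real.sqrt 3 * t ≠ 0 := fun t ht =>
      (aux_pos ε₀ t hε₀ ht.2).ne'
    have hvderiv : deriv v = fun _ => (0:ℝ) := by
      simp [hvdef, deriv_const']
    have hdiff : ∀ t ∈ Ico (0:ℝ) T₀, DifferentiableAt ℝ u t ∧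
        DifferentiableAt ℝ (deriv u) t ∧ DifferentiableAt ℝ v t ∧
        DifferentiableAt ℝ (deriv v) t := by
      intro t ht
      refine ⟨(aux_hd1 ε₀⁻¹ t (hne t ht)).differentiableAt,
        aux_diff2 ε₀⁻¹ t (hne t ht), differentiableAt_const _, ?_⟩
      rw [hvderiv]; exact differentiableAt_const _
    have hode : ∀ t ∈ Ico (0:ℝ) T₀,
        deriv (deriv u) t - 6 * u t ^ 3 + 90 * u t * v t ^ 2 + 32 * v t ^ 3 = 0 ∧
        deriv (deriv v) t + 90 * u t ^ 2 * v t + 96 * u t * v t ^ 2 = 0 := by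
      intro t ht
      constructor
      · have := aux_deriv2 ε₀⁻¹ t (hne t ht)
        simp only [hudef, hvdef]
        rw [this]; ring
      · rw [hvderiv]; simp [hvdef, deriv_const']
    have hu0 : u 0 = ε₀ := by simp [hudef]
    have hdu0 : deriv u 0 = Real.sqrt 3 * ε₀ ^ 2 := by
      have hne0 : ε₀⁻¹ - Real.sqrt 3 * 0 ≠ 0 := by
        simpa using (inv_pos.mpr hε₀).ne'
      have := (aux_hd1 ε₀⁻¹ 0 hne0).deriv
      rw [hudef, this]
      simp [inv_pow]
    have hv0 : v 0 = 0 := rfl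
    have hdv0 : deriv v 0 = 0 := by rw [hvderiv]
    have hε₀δ' : ε₀ * (1 + Real.sqrt 3) ≤ δ := (le_div_iff₀ h1s).mp hε₀δ
    have hεδ : ε₀ < δ := by nlinarith [mul_pos hε₀ h3]
    have hdδ : Real.sqrt 3 * ε₀ ^ 2 < δ := by
      nlinarith [mul_pos hε₀ h3, mul_le_mul_of_nonneg_left hε₀1
        (by positivity : (0:ℝ) ≤ Real.sqrt 3 * ε₀)]
    have hinit : ‖(u 0, v 0, deriv u 0, deriv v 0)‖ < δ := by
      rw [hu0, hdu0, hv0, hdv0]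
      simp only [Prod.norm_def, Real.norm_eq_abs, abs_zero]
      rw [abs_of_pos hε₀, abs_of_pos (by positivity : (0:ℝ) < Real.sqrt 3 * ε₀ ^ 2)]
      simp only [max_lt_iff]
      exact ⟨hεδ, hδ, hdδ, hδ⟩
    set t₀ : ℝ := (ε₀⁻¹ - ε₀) / Real.sqrt 3 with ht₀def
    have ht₀mem : t₀ ∈ Ico (0:ℝ) T₀ := by
      constructor
      · apply div_nonneg _ h3.le
        linarith
      · rw [ht₀def, hT₀def, div_lt_div_iff₀ h3 (by positivity)]
        have : ε₀⁻¹ * ε₀ = 1 := inv_mul_cancel₀ hε₀.ne'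
        nlinarith
    have hut₀ : u t₀ = ε₀⁻¹ := by
      have h' : ε₀⁻¹ - Real.sqrt 3 * t₀ = ε₀ := by
        rw [ht₀def]; field_simp; ring
      show (ε₀⁻¹ - Real.sqrt 3 * t₀)⁻¹ = ε₀⁻¹
      rw [h']
    have hcontra := hstab T₀ hT₀ u v hdiff hode hinit t₀ ht₀mem
    have hge : (1:ℝ) ≤ ‖(u t₀, v t₀, deriv u t₀, deriv v t₀)‖ := by
      calc (1:ℝ) ≤ ε₀⁻¹ := hinv1
        _ = ‖u t₀‖ := by rw [hut₀, Real.norm_eq_abs, abs_of_pos (by positivity)]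
        _ ≤ max ‖u t₀‖ ‖((v t₀, deriv u t₀, deriv v t₀) : ℝ × ℝ × ℝ)‖ :=
            le_max_left _ _
        _ = ‖(u t₀, v t₀, deriv u t₀, deriv v t₀)‖ := by
            rw [Prod.norm_def ((u t₀, v t₀, deriv u t₀, deriv v t₀) : ℝ × ℝ × ℝ × ℝ)]
    linarith
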